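/- Let a₁,…,a_{n₁} be distinct complex numbers in the open upper half-plane, b₁,…,b_{n₂} distinct complex numbers in the open lower half-plane, and α₁,…,α_{n₁}, β₁,…,β_{n₂} ∈ ℂ, and define K(x) = (1/(2πi))[ Σ_{j=1}^{n₁} α_j/(x−a_j) − Σ_{j=1}^{n₂} β_j/(x−b_j) ] for x ∈ ℝ. Suppose that Σ_{j=1}^{n₁} α_j a_j^k = Σ_{j=1}^{n₂} β_j b_j^k for every k = 0, 1, …, m−1. Then for each k = 0, 1, …, m−1, the function y ↦ K(y) y^k is integrable on ℝ and ∫_ℝ K(y) y^k dy = Σ_{j=1}^{n₁} α_j a_j^k. -/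

import Mathlib

open MeasureTheory Real Set
open Filter Topology

/-- The rational kernel with poles `a j` in the upper half-plane and `b j` in the
lower half-plane, and residues `α j`, `β j`. -/
noncomputable def ratKernel {n₁ n₂ : ℕ} (a : Fin n₁ → ℂ) (b : Fin n₂ → ℂ)
    (α : Fin n₁ → ℂ) (β : Fin n₂ → ℂ) (x : ℝ) : ℂ :=
  (1 / (2 * Real.pi * Complex.I)) *
    (∑ j, α j / ((x : ℂ) - a j) - ∑ j, β j / ((x : ℂ) - b j))


lemma sub_ne (p : ℂ) (hp : p.im ≠ 0) (y : ℝ) : (y:ℂ) - p ≠ 0 := by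
  intro h
  apply hp
  have := congrArg Complex.im h
  simpa using this.symm

lemma quad_low (u v t : ℝ) : 0 ≤ (2+2*u^2+v^2)*t^2 - 2*u*v^2*t + (v^2+u^2*v^2+2*v^4) := by
  have hpos : (0:ℝ) < 2+2*u^2+v^2 := by positivity
  nlinarith [sq_nonneg ((2+2*u^2+v^2)*t - u*v^2), sq_nonneg (u*v), sq_nonneg (v^2), sq_nonneg (u*v^2), sq_nonneg v, hpos, mul_pos hpos hpos]

lemma normSq_low (p : ℂ) (y : ℝ) :
    p.im^2 * (1+y^2) ≤ 2*(1+p.re^2+p.im^2) * Complex.normSq ((y:ℂ)-p) := by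
  have h : Complex.normSq ((y:ℂ)-p) = (y - p.re)^2 + p.im^2 := by
    simp [Complex.normSq_apply]; ring
  rw [h]
  have := quad_low p.re p.im (y - p.re)
  nlinarith [this]

noncomputable def cpole (p : ℂ) : ℝ := Real.sqrt (p.im^2 / (2*(1+p.re^2+p.im^2)))

lemma cpole_pos (p : ℂ) (hp : p.im ≠ 0) : 0 < cpole p := by
  apply Real.sqrt_pos.2
  positivity

lemma abs_low (p : ℂ) (y : ℝ) :
    cpole p * Real.sqrt (1+y^2) ≤ ‖(y:ℂ)-p‖ := by
  rw [Complex.norm_def, cpole, ← Real.sqrt_mul (by positivity)]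
  apply Real.sqrt_le_sqrt
  rw [div_mul_eq_mul_div, div_le_iff₀ (by positivity)]
  calc p.im^2 * (1+y^2) ≤ 2*(1+p.re^2+p.im^2) * Complex.normSq ((y:ℂ)-p) := normSq_low p y
  _ = Complex.normSq ((y:ℂ)-p) * (2*(1+p.re^2+p.im^2)) := by ring

lemma integrable_g (p q : ℂ) (hp : p.im ≠ 0) (hq : q.im ≠ 0) :
    Integrable (fun y : ℝ => ((y:ℂ)-p)⁻¹ - ((y:ℂ)-q)⁻¹) := by
  have hcont : Continuous (fun y : ℝ => ((y:ℂ)-p)⁻¹ - ((y:ℂ)-q)⁻¹) := by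
    apply Continuous.sub
    · exact (Complex.continuous_ofReal.sub continuous_const).inv₀ (fun y => sub_ne p hp y)
    · exact (Complex.continuous_ofReal.sub continuous_const).inv₀ (fun y => sub_ne q hq y)
  have hcp := cpole_pos p hp
  have hcq := cpole_pos q hq
  apply Integrable.mono' ((integrable_inv_one_add_sq).const_mul (‖p-q‖ / (cpole p * cpole q))) hcont.aestronglyMeasurable
  filter_upwards with y
  have h1 : ((y:ℂ)-p)⁻¹ - ((y:ℂ)-q)⁻¹ = (p-q) / (((y:ℂ)-p) * ((y:ℂ)-q)) := by
    rw [inv_sub_inv (sub_ne p hp y) (sub_ne q hq y)]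
    congr 1
    ring
  have hsq : Real.sqrt (1+y^2) * Real.sqrt (1+y^2) = 1+y^2 :=
    Real.mul_self_sqrt (by positivity)
  have hy : (0:ℝ) < 1 + y^2 := by positivity
  have hprod : cpole p * cpole q * (1+y^2) ≤ ‖(y:ℂ)-p‖ * ‖(y:ℂ)-q‖ := by
    calc cpole p * cpole q * (1+y^2)
        = (cpole p * Real.sqrt (1+y^2)) * (cpole q * Real.sqrt (1+y^2)) := by
          linear_combination (-(cpole p * cpole q)) * hsq
      _ ≤ ‖(y:ℂ)-p‖ * ‖(y:ℂ)-q‖ := by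
          apply mul_le_mul (abs_low p y) (abs_low q y) (by positivity) (norm_nonneg _)
  rw [h1]
  have : ‖(p-q) / (((y:ℂ)-p) * ((y:ℂ)-q))‖ = ‖p-q‖ / (‖(y:ℂ)-p‖ * ‖(y:ℂ)-q‖) := by
    simp [map_div₀]
  rw [this]
  calc ‖p-q‖ / (‖(y:ℂ)-p‖ * ‖(y:ℂ)-q‖)
      ≤ ‖p-q‖ / (cpole p * cpole q * (1+y^2)) := by
        apply div_le_div_of_nonneg_left (norm_nonneg _) (by positivity) hprod
    _ = ‖p-q‖ / (cpole p * cpole q) * (1+y^2)⁻¹ := by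
        field_simp

noncomputable def FF (p : ℂ) (y : ℝ) : ℂ :=
  ((Real.log ((y - p.re)^2 + p.im^2) / 2 : ℝ) : ℂ) +
    ((Real.arctan ((y - p.re)/p.im) : ℝ) : ℂ) * Complex.I

lemma hasDerivAt_FF (p : ℂ) (hp : p.im ≠ 0) (y : ℝ) :
    HasDerivAt (FF p) (((y:ℂ)-p)⁻¹) y := by
  have hD : (0:ℝ) < (y - p.re)^2 + p.im^2 := by positivity
  have h1 : HasDerivAt (fun y : ℝ => (y - p.re)^2 + p.im^2) (2*(y-p.re)) y := by
    simpa using (((hasDerivAt_id y).sub_const p.re).pow 2).add_const (p.im^2)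
  have h2 : HasDerivAt (fun y : ℝ => Real.log ((y-p.re)^2+p.im^2) / 2)
      ((y-p.re)/((y-p.re)^2+p.im^2)) y := by
    have := (h1.log (ne_of_gt hD)).div_const 2
    refine this.congr_deriv ?_
    field_simp
  have hin : HasDerivAt (fun y : ℝ => (y - p.re)/p.im) (1/p.im) y := by
    simpa using ((hasDerivAt_id y).sub_const p.re).div_const p.im
  have h3 : HasDerivAt (fun y : ℝ => Real.arctan ((y-p.re)/p.im))
      (p.im/((y-p.re)^2+p.im^2)) y := by
    have h := (Real.hasDerivAt_arctan ((y-p.re)/p.im)).comp y hin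
    refine h.congr_deriv ?_
    field_simp
    ring
  have h4 := (h2.ofReal_comp).add ((h3.ofReal_comp).mul_const Complex.I)
  refine h4.congr_deriv ?_
  symm
  have hD0 : ((y - p.re)^2 + p.im^2 : ℝ) ≠ 0 := ne_of_gt hD
  set r := p.re with hr
  set v := p.im with hv
  have hpeq : p = (r:ℂ) + (v:ℂ)*Complex.I := (Complex.re_add_im p).symm
  have hc : ((y:ℂ)-(r:ℂ))^2 + (v:ℂ)^2 ≠ 0 := by
    intro hh
    apply hD0
    have : ((((y-r)^2+v^2 : ℝ)):ℂ) = 0 := by push_cast; linear_combination hh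
    exact_mod_cast this
  rw [hpeq]
  apply inv_eq_of_mul_eq_one_right
  push_cast
  field_simp
  linear_combination (-(v:ℂ)^2) * Complex.I_sq

lemma tendsto_ratio (u v : ℝ) :
    Tendsto (fun R : ℝ => ((R-u)^2+v^2) / ((R+u)^2+v^2)) atTop (𝓝 1) := by
  have hu : Tendsto (fun R : ℝ => u / R) atTop (𝓝 0) := tendsto_const_nhds.div_atTop tendsto_id
  have hv : Tendsto (fun R : ℝ => v / R) atTop (𝓝 0) := tendsto_const_nhds.div_atTop tendsto_id
  have hnum : Tendsto (fun R : ℝ => (1 - u/R)^2 + (v/R)^2) atTop (𝓝 1) := by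
    have := (((tendsto_const_nhds (x := (1:ℝ))).sub hu).pow 2).add (hv.pow 2)
    simpa using this
  have hden : Tendsto (fun R : ℝ => (1 + u/R)^2 + (v/R)^2) atTop (𝓝 1) := by
    have := (((tendsto_const_nhds (x := (1:ℝ))).add hu).pow 2).add (hv.pow 2)
    simpa using this
  have := hnum.div hden one_ne_zero
  rw [div_one] at this
  apply this.congr'
  filter_upwards [eventually_gt_atTop (0:ℝ)] with R hR
  have hR0 : R ≠ 0 := ne_of_gt hR
  simp only [Pi.div_apply]
  field_simp

lemma tendsto_logpart (u v : ℝ) (hv : v ≠ 0) :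
    Tendsto (fun R : ℝ => Real.log ((R-u)^2+v^2) / 2 - Real.log (((-R)-u)^2+v^2) / 2)
      atTop (𝓝 0) := by
  have h1 : Tendsto (fun R : ℝ => Real.log (((R-u)^2+v^2) / ((R+u)^2+v^2))) atTop (𝓝 0) := by
    have := (Real.continuousAt_log one_ne_zero).tendsto.comp (tendsto_ratio u v)
    simpa [Function.comp_def] using this
  have h2 := h1.div_const 2
  rw [zero_div] at h2
  apply h2.congr
  intro R
  have hA : (0:ℝ) < (R-u)^2+v^2 := by positivity
  have hB : (0:ℝ) < (R+u)^2+v^2 := by positivity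
  rw [Real.log_div (ne_of_gt hA) (ne_of_gt hB)]
  have : ((-R)-u)^2 = (R+u)^2 := by ring
  rw [this]
  ring

lemma tendsto_arctanpart (u v : ℝ) (hv : v ≠ 0) :
    Tendsto (fun R : ℝ => Real.arctan ((R-u)/v) - Real.arctan (((-R)-u)/v)) atTop
      (𝓝 ((if 0 < v then (1:ℝ) else -1) * Real.pi)) := by
  have hsub : Tendsto (fun R : ℝ => R - u) atTop atTop := by
    simpa [sub_eq_add_neg] using tendsto_atTop_add_const_right atTop (-u) tendsto_id
  have hsub' : Tendsto (fun R : ℝ => (-R) - u) atTop atBot := by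
    have := tendsto_atBot_add_const_right atTop (-u) tendsto_neg_atTop_atBot
    simpa [sub_eq_add_neg] using this
  rcases hv.lt_or_gt with hneg | hpos
  · have h1 : Tendsto (fun R : ℝ => (R-u)/v) atTop atBot := by
      have ht : Tendsto (fun R : ℝ => (R-u)/(-v)) atTop atTop :=
        hsub.atTop_div_const (by linarith)
      have := tendsto_neg_atTop_atBot.comp ht
      apply this.congr
      intro R
      simp [div_neg]
    have h2 : Tendsto (fun R : ℝ => ((-R)-u)/v) atTop atTop := by
      have ht : Tendsto (fun R : ℝ => ((-R)-u)/(-v)) atTop atBot := by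
        rw [tendsto_div_const_atBot_iff_pos hsub']
        linarith
      have := tendsto_neg_atBot_atTop.comp ht
      apply this.congr
      intro R
      simp [div_neg]
    have a1 := (Real.tendsto_arctan_atBot.mono_right nhdsWithin_le_nhds).comp h1
    have a2 := (Real.tendsto_arctan_atTop.mono_right nhdsWithin_le_nhds).comp h2
    have := a1.sub a2
    simp only [Function.comp] at this
    convert this using 2
    · simp [if_neg (not_lt.2 (le_of_lt hneg))]
      ring
  · have h1 : Tendsto (fun R : ℝ => (R-u)/v) atTop atTop := hsub.atTop_div_const hpos
    have h2 : Tendsto (fun R : ℝ => ((-R)-u)/v) atTop atBot := by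
      rw [tendsto_div_const_atBot_iff_pos hsub']
      exact hpos
    have a1 := (Real.tendsto_arctan_atTop.mono_right nhdsWithin_le_nhds).comp h1
    have a2 := (Real.tendsto_arctan_atBot.mono_right nhdsWithin_le_nhds).comp h2
    have := a1.sub a2
    simp only [Function.comp] at this
    convert this using 2
    · simp [if_pos hpos]

lemma tendsto_FF (p : ℂ) (hp : p.im ≠ 0) :
    Tendsto (fun R : ℝ => FF p R - FF p (-R)) atTop
      (𝓝 (((if 0 < p.im then (1:ℝ) else -1) * Real.pi : ℝ) * Complex.I)) := by
  have hL := tendsto_logpart p.re p.im hp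
  have hA := tendsto_arctanpart p.re p.im hp
  have hLc := (Complex.continuous_ofReal.tendsto _).comp hL
  have hAc := ((Complex.continuous_ofReal.tendsto _).comp hA).mul_const Complex.I
  have hsum := hLc.add hAc
  simp only [Function.comp] at hsum
  have heq : ∀ R : ℝ, FF p R - FF p (-R) =
      ((Real.log ((R-p.re)^2+p.im^2) / 2 - Real.log (((-R)-p.re)^2+p.im^2) / 2 : ℝ) : ℂ) +
      ((Real.arctan ((R-p.re)/p.im) - Real.arctan (((-R)-p.re)/p.im) : ℝ) : ℂ) * Complex.I := by
    intro R
    simp only [FF]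
    push_cast
    ring
  rw [tendsto_congr heq]
  convert hsum using 2
  push_cast
  ring

lemma integral_g_val (p q : ℂ) (hp : p.im ≠ 0) (hq : q.im ≠ 0) :
    ∫ y : ℝ, (((y:ℂ)-p)⁻¹ - ((y:ℂ)-q)⁻¹) =
      ((((if 0 < p.im then (1:ℝ) else -1) - (if 0 < q.im then (1:ℝ) else -1)) * Real.pi : ℝ) : ℂ) * Complex.I := by
  have hint := integrable_g p q hp hq
  have h1 : Tendsto (fun R : ℝ => ∫ y in (-R)..R, (((y:ℂ)-p)⁻¹ - ((y:ℂ)-q)⁻¹)) atTop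
      (𝓝 (∫ y : ℝ, (((y:ℂ)-p)⁻¹ - ((y:ℂ)-q)⁻¹))) :=
    intervalIntegral_tendsto_integral hint tendsto_neg_atTop_atBot tendsto_id
  have heq : ∀ R : ℝ, (∫ y in (-R)..R, (((y:ℂ)-p)⁻¹ - ((y:ℂ)-q)⁻¹)) =
      (FF p R - FF p (-R)) - (FF q R - FF q (-R)) := by
    intro R
    have hd : ∀ y ∈ uIcc (-R) R, HasDerivAt (fun y : ℝ => FF p y - FF q y)
        (((y:ℂ)-p)⁻¹ - ((y:ℂ)-q)⁻¹) y := fun y _ =>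
      (hasDerivAt_FF p hp y).sub (hasDerivAt_FF q hq y)
    have := intervalIntegral.integral_eq_sub_of_hasDerivAt hd hint.intervalIntegrable
    rw [this]
    ring
  have h2 : Tendsto (fun R : ℝ => ∫ y in (-R)..R, (((y:ℂ)-p)⁻¹ - ((y:ℂ)-q)⁻¹)) atTop
      (𝓝 (((((if 0 < p.im then (1:ℝ) else -1) - (if 0 < q.im then (1:ℝ) else -1)) * Real.pi : ℝ) : ℂ) * Complex.I)) := by
    rw [tendsto_congr heq]
    have ht := (tendsto_FF p hp).sub (tendsto_FF q hq)
    convert ht using 2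
    push_cast
    ring
  exact tendsto_nhds_unique h1 h2

lemma ratKernel_case0 {n₁ n₂ : ℕ} (a : Fin n₁ → ℂ) (b : Fin n₂ → ℂ)
    (haU : ∀ j, 0 < (a j).im) (hbL : ∀ j, (b j).im < 0)
    (A : Fin n₁ → ℂ) (B : Fin n₂ → ℂ) (hAB : ∑ j, A j = ∑ j, B j) :
    Integrable (fun y : ℝ => ratKernel a b A B y) ∧
      (∫ y : ℝ, ratKernel a b A B y) = ∑ j, A j := by
  have hIim : (-Complex.I).im ≠ 0 := by simp
  have haim : ∀ j, (a j).im ≠ 0 := fun j => ne_of_gt (haU j)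
  have hbim : ∀ j, (b j).im ≠ 0 := fun j => ne_of_lt (hbL j)
  set c : ℂ := 1 / (2 * Real.pi * Complex.I) with hc
  set g : ℂ → ℝ → ℂ := fun p y => ((y:ℂ)-p)⁻¹ - ((y:ℂ)-(-Complex.I))⁻¹ with hg
  have hpt : ∀ y : ℝ, ratKernel a b A B y =
      c * ((∑ j, A j * g (a j) y) - ∑ j, B j * g (b j) y) := by
    intro y
    rw [ratKernel]
    congr 1
    simp only [hg, mul_sub, Finset.sum_sub_distrib, ← Finset.sum_mul, div_eq_mul_inv]
    rw [hAB]
    ring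
  have hFint : Integrable (fun y : ℝ => (∑ j, A j * g (a j) y) - ∑ j, B j * g (b j) y) := by
    apply Integrable.sub
    · apply integrable_finset_sum
      intro j _
      exact (integrable_g (a j) (-Complex.I) (haim j) hIim).const_mul (A j)
    · apply integrable_finset_sum
      intro j _
      exact (integrable_g (b j) (-Complex.I) (hbim j) hIim).const_mul (B j)
  have hint : Integrable (fun y : ℝ => ratKernel a b A B y) := by
    apply (hFint.const_mul c).congr
    filter_upwards with y
    exact (hpt y).symm
  refine ⟨hint, ?_⟩
  have hval : (∫ y : ℝ, ratKernel a b A B y) =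
      c * ((∑ j, A j * ∫ y : ℝ, g (a j) y) - ∑ j, B j * ∫ y : ℝ, g (b j) y) := by
    rw [integral_congr_ae (Filter.Eventually.of_forall hpt), integral_const_mul]
    congr 1
    rw [integral_sub (integrable_finset_sum _ fun j _ => (integrable_g (a j) (-Complex.I) (haim j) hIim).const_mul (A j))
      (integrable_finset_sum _ fun j _ => (integrable_g (b j) (-Complex.I) (hbim j) hIim).const_mul (B j))]
    rw [integral_finset_sum _ fun j _ => (integrable_g (a j) (-Complex.I) (haim j) hIim).const_mul (A j)]
    rw [integral_finset_sum _ fun j _ => (integrable_g (b j) (-Complex.I) (hbim j) hIim).const_mul (B j)]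
    simp only [integral_const_mul]
    rfl
  rw [hval]
  have hga : ∀ j : Fin n₁, (∫ y : ℝ, g (a j) y) = ((2*Real.pi : ℝ) : ℂ) * Complex.I := by
    intro j
    rw [hg]
    rw [integral_g_val (a j) (-Complex.I) (haim j) hIim]
    norm_num [if_pos (haU j)]
  have hgb : ∀ j : Fin n₂, (∫ y : ℝ, g (b j) y) = 0 := by
    intro j
    rw [hg]
    rw [integral_g_val (b j) (-Complex.I) (hbim j) hIim]
    norm_num [if_neg (not_lt.2 (le_of_lt (hbL j)))]
  simp only [hga, hgb, mul_zero, Finset.sum_const_zero, sub_zero, ← Finset.sum_mul]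
  rw [hc]
  have hpi : (Real.pi : ℂ) ≠ 0 := by
    simpa using Real.pi_ne_zero
  field_simp
  push_cast
  ring

lemma pow_div_identity (Y p : ℂ) (hne : Y - p ≠ 0) (k : ℕ) (w : ℂ) :
    w / (Y - p) * Y^k = (w * p^k) / (Y - p) + ∑ i ∈ Finset.range k, w * (Y^i * p^(k-1-i)) := by
  have hg := geom_sum₂_mul Y p k
  rw [← Finset.mul_sum]
  field_simp
  linear_combination (-w) * hg

lemma sum_swap_poly {n : ℕ} (c : Fin n → ℂ) (z : Fin n → ℂ) (Y : ℂ) (k : ℕ) :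
    ∑ j, ∑ i ∈ Finset.range k, c j * (Y^i * z j^(k-1-i)) =
      ∑ i ∈ Finset.range k, Y^i * ∑ j, c j * z j^(k-1-i) := by
  rw [Finset.sum_comm]
  apply Finset.sum_congr rfl
  intro i _
  rw [Finset.mul_sum]
  apply Finset.sum_congr rfl
  intro j _
  ring

lemma ratKernel_pow_eq {n₁ n₂ : ℕ} (a : Fin n₁ → ℂ) (b : Fin n₂ → ℂ)
    (haim : ∀ j, (a j).im ≠ 0) (hbim : ∀ j, (b j).im ≠ 0)
    (α : Fin n₁ → ℂ) (β : Fin n₂ → ℂ) (k : ℕ)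
    (hvan : ∀ i < k, ∑ j, α j * a j ^ i = ∑ j, β j * b j ^ i) (y : ℝ) :
    ratKernel a b α β y * (y:ℂ)^k =
      ratKernel a b (fun j => α j * a j ^ k) (fun j => β j * b j ^ k) y := by
  rw [ratKernel, ratKernel]
  have h1 : ∑ j, α j / ((y:ℂ) - a j) * (y:ℂ)^k =
      (∑ j, α j * a j ^ k / ((y:ℂ) - a j)) + ∑ j, ∑ i ∈ Finset.range k, α j * ((y:ℂ)^i * a j^(k-1-i)) := by
    rw [← Finset.sum_add_distrib]
    exact Finset.sum_congr rfl fun j _ => pow_div_identity _ _ (sub_ne (a j) (haim j) y) k (α j)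
  have h2 : ∑ j, β j / ((y:ℂ) - b j) * (y:ℂ)^k =
      (∑ j, β j * b j ^ k / ((y:ℂ) - b j)) + ∑ j, ∑ i ∈ Finset.range k, β j * ((y:ℂ)^i * b j^(k-1-i)) := by
    rw [← Finset.sum_add_distrib]
    exact Finset.sum_congr rfl fun j _ => pow_div_identity _ _ (sub_ne (b j) (hbim j) y) k (β j)
  rw [sum_swap_poly] at h1
  rw [sum_swap_poly] at h2
  have h3 : ∑ i ∈ Finset.range k, ((y:ℂ))^i * ∑ j, α j * a j^(k-1-i) =
      ∑ i ∈ Finset.range k, ((y:ℂ))^i * ∑ j, β j * b j^(k-1-i) := by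
    apply Finset.sum_congr rfl
    intro i hi
    have := Finset.mem_range.mp hi
    rw [hvan (k-1-i) (by omega)]
  have hkey : (∑ j, α j / ((y:ℂ) - a j)) * (y:ℂ)^k - (∑ j, β j / ((y:ℂ) - b j)) * (y:ℂ)^k =
      (∑ j, α j * a j ^ k / ((y:ℂ) - a j)) - ∑ j, β j * b j ^ k / ((y:ℂ) - b j) := by
    rw [Finset.sum_mul, Finset.sum_mul, h1, h2, h3]
    ring
  linear_combination (1 / (2 * (Real.pi:ℂ) * Complex.I)) * hkey


/-- If the moment matching conditions `Σ α_j a_j^k = Σ β_j b_j^k` hold for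
`k = 0, …, m−1`, then for each such `k` the function `y ↦ K(y) y^k` is integrable
on `ℝ` and `∫ K(y) y^k dy = Σ α_j a_j^k`. -/
theorem stmt_8 (n₁ n₂ : ℕ) (a : Fin n₁ → ℂ) (b : Fin n₂ → ℂ)
    (ha : Function.Injective a) (hb : Function.Injective b)
    (haU : ∀ j, 0 < (a j).im) (hbL : ∀ j, (b j).im < 0)
    (α : Fin n₁ → ℂ) (β : Fin n₂ → ℂ) (m : ℕ) (hm : 1 ≤ m)
    (hmom : ∀ k < m, ∑ j, α j * a j ^ k = ∑ j, β j * b j ^ k) :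
    ∀ k < m, Integrable (fun y : ℝ => ratKernel a b α β y * (y : ℂ) ^ k) ∧
      (∫ y : ℝ, ratKernel a b α β y * (y : ℂ) ^ k) = ∑ j, α j * a j ^ k := by
  intro k hk
  have haim : ∀ j, (a j).im ≠ 0 := fun j => ne_of_gt (haU j)
  have hbim : ∀ j, (b j).im ≠ 0 := fun j => ne_of_lt (hbL j)
  have hpt := fun y : ℝ => ratKernel_pow_eq a b haim hbim α β k (fun i hi => hmom i (hi.trans hk)) y
  have h0 := ratKernel_case0 a b haU hbL (fun j => α j * a j ^ k) (fun j => β j * b j ^ k) (hmom k hk)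
  constructor
  · exact h0.1.congr (Filter.Eventually.of_forall fun y => (hpt y).symm)
  · rw [integral_congr_ae (Filter.Eventually.of_forall hpt)]
    exact h0.2
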